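/- Let t : H → H be a bounded operator and suppose that for all a, b ∈ B(H), t a t* t b t* = t a b t*. If t ≠ 0 in the sense that Ad(t) is a nonzero map, then t* t = 1, i.e. t is an isometry. Consequently, Ad(t) : B(H) → B(H'), s ↦ t s t*, is a nonzero *-homomorphism if and only if t is an isometry. -/

import Mathlib

open ContinuousLinearMap

variable {H H' : Type*}
  [NormedAddCommGroup H] [InnerProductSpace ℂ H] [CompleteSpace H]
  [NormedAddCommGroup H'] [InnerProductSpace ℂ H'] [CompleteSpace H']

/-- The adjoint action `Ad(t)(s) = t s t*`. -/
noncomputable def Ad (t : H →L[ℂ] H') (s : H →L[ℂ] H) : H' →L[ℂ] H' :=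
  (t.comp s).comp (ContinuousLinearMap.adjoint t)

/-- If `Ad(t)` is multiplicative and nonzero then `t* t = 1`, i.e. `t` is an isometry.
Consequently (for nontrivial `H`), `Ad(t)` is a nonzero multiplicative (hence `*`-) map
if and only if `t` is an isometry. -/
theorem stmt4 [Nontrivial H] (t : H →L[ℂ] H') :
    ((∀ a b : H →L[ℂ] H, Ad t (a.comp b) = (Ad t a).comp (Ad t b)) ∧ (∃ s, Ad t s ≠ 0))
      ↔ (ContinuousLinearMap.adjoint t).comp t = 1 := by
  constructor
  · rintro ⟨hmul, s, hs⟩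
    have ht : t ≠ 0 := by
      rintro rfl
      apply hs
      ext y
      simp [Ad]
    have ht' : ContinuousLinearMap.adjoint t ≠ 0 := by
      intro h
      apply ht
      rw [← ContinuousLinearMap.adjoint_adjoint t, h, map_zero]
    obtain ⟨z, hz⟩ : ∃ z, t z ≠ 0 := by
      rw [DFunLike.ne_iff] at ht
      simpa using ht
    obtain ⟨z', hz'⟩ : ∃ z', ContinuousLinearMap.adjoint t z' ≠ 0 := by
      rw [DFunLike.ne_iff] at ht'
      simpa using ht'
    ext x
    by_contra hx
    simp only [ContinuousLinearMap.comp_apply, ContinuousLinearMap.one_apply] at hx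
    set v := ContinuousLinearMap.adjoint t z' with hv
    set w := ContinuousLinearMap.adjoint t (t x) - x with hw
    have hwne : w ≠ 0 := sub_ne_zero.mpr hx
    set a : H →L[ℂ] H := (innerSL ℂ w).smulRight z with ha
    set b : H →L[ℂ] H := (innerSL ℂ v).smulRight x with hb
    have e := congrFun (congrArg DFunLike.coe (hmul a b)) z'
    simp only [Ad, ContinuousLinearMap.comp_apply, ha, hb,
      ContinuousLinearMap.smulRight_apply, innerSL_apply_apply, map_smul,
      inner_smul_right, ← hv, smul_smul] at e
    have hvv : (inner ℂ v v : ℂ) ≠ 0 := by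
      rw [inner_self_ne_zero]
      exact hz'
    have e2 : (inner ℂ v v * inner ℂ w x : ℂ) = inner ℂ v v * inner ℂ w (ContinuousLinearMap.adjoint t (t x)) :=
      smul_left_injective ℂ hz e
    have e3 : (inner ℂ w x : ℂ) = inner ℂ w (ContinuousLinearMap.adjoint t (t x)) :=
      mul_left_cancel₀ hvv e2
    have : (inner ℂ w w : ℂ) = 0 := by
      rw [hw, inner_sub_right, ← e3, sub_self]
    exact hwne (inner_self_eq_zero.mp this)
  · intro h
    have h' : ∀ x, ContinuousLinearMap.adjoint t (t x) = x := by
      intro x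
      have := congrFun (congrArg DFunLike.coe h) x
      simpa using this
    constructor
    · intro a b
      ext y
      simp only [Ad, ContinuousLinearMap.comp_apply, h']
    · obtain ⟨x, hx⟩ := exists_ne (0 : H)
      refine ⟨1, fun h0 => hx ?_⟩
      have e : Ad t 1 (t x) = 0 := by rw [h0]; rfl
      simp only [Ad, ContinuousLinearMap.comp_apply, ContinuousLinearMap.one_apply, h'] at e
      have := h' x
      rw [e, map_zero] at this
      exact this.symm
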